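/- All eigenvalues of the linearization M are nonnegative: if M(Y) = αY for a nonzero Hermitian Y, then α ≥ 0. -/

import Mathlib

open Matrix MeasureTheory Real Filter
open scoped ComplexOrder

noncomputable section

abbrev Mat (n : ℕ) := Matrix (Fin n) (Fin n) ℂ
abbrev Vec (n : ℕ) := Matrix (Fin n) (Fin 1) ℂ

/-- the point e^{jθ} on the unit circle -/
def circPt (θ : ℝ) : ℂ := Complex.exp (θ * Complex.I)

/-- G(e^{jθ}) = (e^{jθ} I - A)⁻¹ B -/
def Gm {n : ℕ} (A : Mat n) (B : Vec n) (θ : ℝ) : Vec n :=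
  (circPt θ • (1 : Mat n) - A)⁻¹ * B

/-- the scalar G* Λ G at e^{jθ} -/
def quad {n : ℕ} (A : Mat n) (B : Vec n) (Λ : Mat n) (θ : ℝ) : ℂ :=
  ((Gm A B θ)ᴴ * Λ * Gm A B θ) 0 0

/-- normalized entrywise matrix integral over the unit circle -/
def mInt {n : ℕ} (f : ℝ → Mat n) : Mat n :=
  Matrix.of fun i j => (1 / (2 * π) : ℝ) • ∫ θ in (0:ℝ)..(2 * π), f θ i j

/-- normalized scalar (complex) integral over the unit circle -/
def sInt (f : ℝ → ℂ) : ℂ := (1 / (2 * π) : ℝ) • ∫ θ in (0:ℝ)..(2 * π), f θ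

/-- normalized scalar (real) integral over the unit circle -/
def sIntR (f : ℝ → ℝ) : ℝ := (1 / (2 * π)) * ∫ θ in (0:ℝ)..(2 * π), f θ

/-- all eigenvalues of A lie in the open unit disc -/
def IsStable {n : ℕ} (A : Mat n) : Prop := ∀ μ ∈ spectrum ℂ A, ‖μ‖ < 1

/-- (A,B) is a reachable pair: the controllability matrix has full rank -/
def Reachable {n : ℕ} (A : Mat n) (B : Vec n) : Prop :=
  (Matrix.of fun (i : Fin n) (k : Fin n) => (A ^ (k : ℕ) * B) i 0).rank = n

open scoped Classical in
/-- positive semidefinite square root (junk value 0 off the psd cone) -/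
def msqrt {n : ℕ} (M : Mat n) : Mat n :=
  if h : M.PosSemidef then (h.1.eigenvectorUnitary : Mat n) *
    diagonal ((↑) ∘ (√·) ∘ h.1.eigenvalues) * (star h.1.eigenvectorUnitary : Mat n) else 0

/-- the moment map ∫ G (Ψ/(G*ΛG)) G* -/
def moment {n : ℕ} (A : Mat n) (B : Vec n) (Ψ : ℝ → ℝ) (Λ : Mat n) : Mat n :=
  mInt (fun θ => ((Ψ θ : ℂ) / quad A B Λ θ) • (Gm A B θ * (Gm A B θ)ᴴ))

/-- the iteration map Θ(Λ) = ∫ Λ^{1/2} G (Ψ/(G*ΛG)) G* Λ^{1/2} -/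
def Theta {n : ℕ} (A : Mat n) (B : Vec n) (Ψ : ℝ → ℝ) (Λ : Mat n) : Mat n :=
  mInt (fun θ => ((Ψ θ : ℂ) / quad A B Λ θ) •
    (msqrt Λ * (Gm A B θ * (Gm A B θ)ᴴ) * msqrt Λ))

/-- the linearization M of Θ at Λ:
M(X) = X - Λ^{1/2} ∫ (GΨG*/(G*ΛG)) (G*XG/(G*ΛG)) Λ^{1/2} -/
def Mlin {n : ℕ} (A : Mat n) (B : Vec n) (Ψ : ℝ → ℝ) (Λ : Mat n) (X : Mat n) : Mat n :=
  X - msqrt Λ * mInt (fun θ =>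
    (((Ψ θ : ℂ) * (((Gm A B θ)ᴴ * X * Gm A B θ) 0 0)) / (quad A B Λ θ) ^ 2) •
      (Gm A B θ * (Gm A B θ)ᴴ)) * msqrt Λ

/-- the range of the operator Γ : Φ ↦ ∫ G Φ G* on continuous (2π-periodic) functions -/
def RangeGamma {n : ℕ} (A : Mat n) (B : Vec n) : Set (Mat n) :=
  {M | ∃ Φ : ℝ → ℝ, Continuous Φ ∧ (∀ θ, Φ (θ + 2 * π) = Φ θ) ∧
    M = mInt (fun θ => (Φ θ : ℂ) • (Gm A B θ * (Gm A B θ)ᴴ))}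

namespace Stmt16Aux

open intervalIntegral

variable {n : ℕ}

lemma mInt_apply (f : ℝ → Mat n) (i j : Fin n) : mInt f i j = sInt (fun θ => f θ i j) := rfl

lemma conj_intervalIntegral (f : ℝ → ℂ) (a b : ℝ) :
    (starRingEnd ℂ) (∫ θ in a..b, f θ) = ∫ θ in a..b, (starRingEnd ℂ) (f θ) := by
  rw [intervalIntegral, intervalIntegral, map_sub, integral_conj, integral_conj]

lemma conj_sInt (f : ℝ → ℂ) :
    (starRingEnd ℂ) (sInt f) = sInt (fun θ => (starRingEnd ℂ) (f θ)) := by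
  unfold sInt
  rw [Complex.real_smul, Complex.real_smul, _root_.map_mul, Complex.conj_ofReal,
    conj_intervalIntegral]

lemma sInt_nonneg (f : ℝ → ℂ) (hf : ∀ θ, 0 ≤ f θ) : 0 ≤ sInt f := by
  have hre : f = fun θ => (((f θ).re : ℝ) : ℂ) := funext fun θ => by
    have h := (Complex.le_def.mp (hf θ))
    exact Complex.ext rfl (by simpa using h.2.symm)
  rw [hre]
  unfold sInt
  rw [intervalIntegral.integral_ofReal, Complex.real_smul, ← Complex.ofReal_mul,
    Complex.zero_le_real]
  have h2π : (0:ℝ) ≤ 2 * π := by positivity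
  refine mul_nonneg (by positivity) ?_
  exact intervalIntegral.integral_nonneg h2π
    (fun θ _ => by simpa using (Complex.le_def.mp (hf θ)).1)

lemma sInt_sum {ι : Type*} (s : Finset ι) (h : ι → ℝ → ℂ)
    (hint : ∀ i ∈ s, IntervalIntegrable (h i) volume 0 (2*π)) :
    ∑ i ∈ s, sInt (h i) = sInt (fun θ => ∑ i ∈ s, h i θ) := by
  unfold sInt
  rw [← Finset.smul_sum]
  congr 1
  exact (intervalIntegral.integral_finset_sum hint).symm

lemma sInt_sub (f g : ℝ → ℂ)
    (hf : IntervalIntegrable f volume 0 (2*π)) (hg : IntervalIntegrable g volume 0 (2*π)) :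
    sInt f - sInt g = sInt (fun θ => f θ - g θ) := by
  unfold sInt
  rw [← smul_sub]
  congr 1
  exact (intervalIntegral.integral_sub hf hg).symm

lemma sInt_mul_const (f : ℝ → ℂ) (c : ℂ) : sInt f * c = sInt (fun θ => f θ * c) := by
  unfold sInt; rw [smul_mul_assoc, intervalIntegral.integral_mul_const]

lemma const_mul_sInt (f : ℝ → ℂ) (c : ℂ) : c * sInt f = sInt (fun θ => c * f θ) := by
  unfold sInt; rw [mul_smul_comm, intervalIntegral.integral_const_mul]

set_option maxHeartbeats 1000000 in
lemma sInt_sum2 (g : Fin n → Fin n → ℝ → ℂ)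
    (hint : ∀ i j, IntervalIntegrable (g i j) volume 0 (2*π)) :
    (∑ i, ∑ j, sInt (g i j)) = sInt (fun θ => ∑ i, ∑ j, g i j θ) := by
  have h1 : ∀ i : Fin n, (∑ j, sInt (g i j)) = sInt (fun θ => ∑ j, g i j θ) := fun i =>
    sInt_sum _ _ (fun j _ => hint i j)
  rw [Finset.sum_congr rfl (fun i _ => h1 i)]
  refine sInt_sum _ _ (fun i _ => ?_)
  have h := IntervalIntegrable.sum (μ := volume) (a := 0) (b := 2*π) Finset.univ
    (fun j _ => hint i j)
  have hfe : (∑ j : Fin n, g i j) = fun θ => ∑ j, g i j θ := by funext θ; simp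
  rwa [hfe] at h

lemma mInt_sub (f g : ℝ → Mat n)
    (hf : ∀ i j, IntervalIntegrable (fun θ => f θ i j) volume 0 (2*π))
    (hg : ∀ i j, IntervalIntegrable (fun θ => g θ i j) volume 0 (2*π)) :
    mInt f - mInt g = mInt (fun θ => f θ - g θ) := by
  refine Matrix.ext fun i j => ?_
  rw [Matrix.sub_apply, mInt_apply, mInt_apply, mInt_apply, sInt_sub _ _ (hf i j) (hg i j)]
  rfl

lemma trace_mInt_mul (f : ℝ → Mat n) (C : Mat n)
    (hint : ∀ i j, IntervalIntegrable (fun θ => f θ i j) volume 0 (2*π)) :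
    Matrix.trace (mInt f * C) = sInt (fun θ => Matrix.trace (f θ * C)) := by
  have expand : ∀ M : Mat n, Matrix.trace (M * C) = ∑ i, ∑ j, M i j * C j i := fun M => by
    simp [Matrix.trace, Matrix.mul_apply, Matrix.diag]
  have h1 : ∀ i j : Fin n, (mInt f) i j * C j i = sInt (fun θ => f θ i j * C j i) :=
    fun i j => by rw [mInt_apply, sInt_mul_const]
  rw [expand]
  simp_rw [h1]
  rw [sInt_sum2 _ (fun i j => (hint i j).mul_const _)]
  simp_rw [← expand]

lemma mInt_isHermitian {f : ℝ → Mat n} (hf : ∀ θ, (f θ).IsHermitian) :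
    (mInt f).IsHermitian := by
  refine Matrix.ext fun i j => ?_
  rw [Matrix.conjTranspose_apply, mInt_apply, mInt_apply, Complex.star_def, conj_sInt]
  congr 1; funext θ
  rw [← Complex.star_def, ← Matrix.conjTranspose_apply, hf θ]

lemma mInt_posSemidef {f : ℝ → Mat n}
    (hint : ∀ i j, IntervalIntegrable (fun θ => f θ i j) volume 0 (2*π))
    (hf : ∀ θ, (f θ).PosSemidef) : (mInt f).PosSemidef := by
  refine Matrix.PosSemidef.of_dotProduct_mulVec_nonneg (mInt_isHermitian (fun θ => (hf θ).1)) fun x => ?_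
  have expand : ∀ M : Mat n, dotProduct (star x) (M *ᵥ x)
      = ∑ i, ∑ j, star (x i) * (M i j * x j) := fun M => by
    simp [dotProduct, Matrix.mulVec, Finset.mul_sum]
  have h1 : ∀ i j : Fin n, star (x i) * ((mInt f) i j * x j)
      = sInt (fun θ => star (x i) * (f θ i j * x j)) := fun i j => by
    rw [mInt_apply, sInt_mul_const, const_mul_sInt]
  rw [expand]
  simp_rw [h1]
  rw [sInt_sum2 _ (fun i j => ((hint i j).mul_const _).const_mul _)]
  simp_rw [← expand]
  exact sInt_nonneg _ (fun θ => (hf θ).dotProduct_mulVec_nonneg x)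

lemma smul_posSemidef {c : ℂ} (hc : 0 ≤ c) {M : Mat n} (hM : M.PosSemidef) :
    (c • M).PosSemidef := by
  refine Matrix.PosSemidef.of_dotProduct_mulVec_nonneg ?_ ?_
  · have hcs : star c = c := by
      rw [Complex.star_def, Complex.conj_eq_iff_im]
      simpa using (Complex.le_def.mp hc).2.symm
    rw [Matrix.IsHermitian, Matrix.conjTranspose_smul, hcs, hM.1]
  · intro x
    rw [Matrix.smul_mulVec, dotProduct_smul, smul_eq_mul]
    exact mul_nonneg hc (hM.dotProduct_mulVec_nonneg x)

lemma diag_nonneg {M : Mat n} (hM : M.PosSemidef) (i : Fin n) : 0 ≤ M i i := by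
  simpa [dotProduct, Matrix.mulVec, Pi.single_apply, Finset.sum_ite_eq] using hM.dotProduct_mulVec_nonneg (Pi.single i 1)

lemma trace_nonneg {M : Mat n} (hM : M.PosSemidef) : 0 ≤ M.trace :=
  Finset.sum_nonneg (fun i _ => diag_nonneg hM i)

lemma trace_proj_nonneg {Q M : Mat n} (hQ : Q.IsHermitian) (hQ2 : Q * Q = Q)
    (hM : M.PosSemidef) : 0 ≤ (Q * M).trace := by
  have h := hM.mul_mul_conjTranspose_same Q
  rw [hQ.eq] at h
  have heq : (Q * M).trace = (Q * M * Q).trace := by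
    conv_lhs => rw [← hQ2]
    rw [Matrix.mul_assoc, Matrix.trace_mul_comm]
  rw [heq]
  exact trace_nonneg h

lemma trace_proj_le {Q M : Mat n} (hQ : Q.IsHermitian) (hQ2 : Q * Q = Q)
    (hM : M.PosSemidef) : (Q * M).trace ≤ M.trace := by
  have hQ' : (1 - Q).IsHermitian := Matrix.isHermitian_one.sub hQ
  have hQ2' : (1 - Q) * (1 - Q) = 1 - Q := by
    simp [Matrix.sub_mul, Matrix.mul_sub, hQ2]
  have h := trace_proj_nonneg hQ' hQ2' hM
  rw [Matrix.sub_mul, Matrix.one_mul, Matrix.trace_sub] at h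
  exact sub_nonneg.mp h

lemma continuous_Gm (A : Mat n) (B : Vec n) (hA : IsStable A) :
    Continuous (fun θ => Gm A B θ) := by
  have hcirc : Continuous circPt := by
    unfold circPt
    exact Complex.continuous_exp.comp (Complex.continuous_ofReal.mul continuous_const)
  have hM : Continuous fun θ : ℝ => circPt θ • (1 : Mat n) - A :=
    (hcirc.smul continuous_const).sub continuous_const
  have hdet : ∀ θ : ℝ, (circPt θ • (1 : Mat n) - A).det ≠ 0 := by
    intro θ h0
    have hnu : ¬ IsUnit (circPt θ • (1:Mat n) - A) := by
      rw [Matrix.isUnit_iff_isUnit_det, h0]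
      exact not_isUnit_zero
    have hsp : circPt θ ∈ spectrum ℂ A := by
      rw [spectrum.mem_iff]
      convert hnu using 2
      rw [Algebra.algebraMap_eq_smul_one]
    have hlt := hA _ hsp
    simp [circPt, Complex.norm_exp] at hlt
  have heq : (fun θ => Gm A B θ)
      = fun θ => ((circPt θ • (1:Mat n) - A).det⁻¹ •
          (circPt θ • (1:Mat n) - A).adjugate) * B := by
    funext θ
    rw [Gm, Matrix.inv_def, Ring.inverse_eq_inv']
  rw [heq]
  exact ((hM.matrix_det.inv₀ hdet).smul hM.matrix_adjugate).matrix_mul continuous_const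

end Stmt16Aux

namespace Stmt16Aux

open intervalIntegral

variable {n : ℕ}

/-- the scalar G* X G -/
def uu (A : Mat n) (B : Vec n) (X : Mat n) (θ : ℝ) : ℂ :=
  ((Gm A B θ)ᴴ * X * Gm A B θ) 0 0

/-- the integrand of the second term of `Mlin` -/
def itg (A : Mat n) (B : Vec n) (Ψ : ℝ → ℝ) (Λ X : Mat n) (θ : ℝ) : Mat n :=
  (((Ψ θ : ℂ) * uu A B X θ) / (quad A B Λ θ) ^ 2) • (Gm A B θ * (Gm A B θ)ᴴ)

/-- the linear map T appearing in `Mlin = id - T` -/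
def Tmap (A : Mat n) (B : Vec n) (Ψ : ℝ → ℝ) (Λ X : Mat n) : Mat n :=
  msqrt Λ * mInt (itg A B Ψ Λ X) * msqrt Λ

lemma Mlin_eq (A : Mat n) (B : Vec n) (Ψ : ℝ → ℝ) (Λ X : Mat n) :
    Mlin A B Ψ Λ X = X - Tmap A B Ψ Λ X := rfl

section Facts

variable (A : Mat n) (B : Vec n) (Ψ : ℝ → ℝ) (Λ : Mat n)

lemma conj_uu {X : Mat n} (hX : X.IsHermitian) (θ : ℝ) :
    (starRingEnd ℂ) (uu A B X θ) = uu A B X θ := by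
  have h := isHermitian_conjTranspose_mul_mul (Gm A B θ) hX
  calc (starRingEnd ℂ) (uu A B X θ)
      = ((Gm A B θ)ᴴ * X * Gm A B θ)ᴴ 0 0 := by
        rw [Matrix.conjTranspose_apply, Complex.star_def]; rfl
    _ = uu A B X θ := by rw [h.eq]; rfl

lemma quad_conj (hΛH : Λ.IsHermitian) (θ : ℝ) :
    (starRingEnd ℂ) (quad A B Λ θ) = quad A B Λ θ :=
  conj_uu A B hΛH θ

lemma quad_real (hΛH : Λ.IsHermitian) (θ : ℝ) :
    quad A B Λ θ = (((quad A B Λ θ).re : ℝ) : ℂ) :=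
  (Complex.conj_eq_iff_re.mp (quad_conj A B Λ hΛH θ)).symm

lemma uu_nonneg {X : Mat n} (hX : X.PosSemidef) (θ : ℝ) : 0 ≤ uu A B X θ := by
  have h := hX.conjTranspose_mul_mul_same (Gm A B θ)
  simpa [uu, dotProduct, Matrix.mulVec, Pi.single_apply, Finset.sum_ite_eq] using
    h.dotProduct_mulVec_nonneg (Pi.single 0 1)

lemma uu_sub (X Z : Mat n) (θ : ℝ) :
    uu A B (X - Z) θ = uu A B X θ - uu A B Z θ := by
  simp [uu, Matrix.mul_sub, Matrix.sub_mul]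

lemma cont_uu (hA : IsStable A) (X : Mat n) : Continuous (uu A B X) := by
  have hg := continuous_Gm A B hA
  exact ((hg.matrix_conjTranspose.matrix_mul continuous_const).matrix_mul hg).matrix_elem 0 0

lemma quad_ne_zero (hq : ∀ θ, 0 < (quad A B Λ θ).re) (θ : ℝ) : quad A B Λ θ ≠ 0 :=
  fun h0 => absurd (hq θ) (by simp [h0])

lemma itg_int (hA : IsStable A) (hΨc : Continuous Ψ)
    (hq : ∀ θ, 0 < (quad A B Λ θ).re) (X : Mat n) (i j : Fin n) :
    IntervalIntegrable (fun θ => itg A B Ψ Λ X θ i j) volume 0 (2*π) := by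
  have hg := continuous_Gm A B hA
  have hcoef : Continuous fun θ => ((Ψ θ : ℂ) * uu A B X θ) / (quad A B Λ θ) ^ 2 :=
    ((Complex.continuous_ofReal.comp hΨc).mul (cont_uu A B hA X)).div
      ((cont_uu A B hA Λ).pow 2) (fun θ => pow_ne_zero _ (quad_ne_zero A B Λ hq θ))
  have hc : Continuous fun θ => itg A B Ψ Λ X θ i j := by
    simp only [itg, Matrix.smul_apply, smul_eq_mul]
    exact hcoef.mul ((hg.matrix_mul hg.matrix_conjTranspose).matrix_elem i j)
  exact hc.intervalIntegrable _ _

lemma mom_int (hA : IsStable A) (hΨc : Continuous Ψ)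
    (hq : ∀ θ, 0 < (quad A B Λ θ).re) (i j : Fin n) :
    IntervalIntegrable
      (fun θ => (((Ψ θ : ℂ) / quad A B Λ θ) • (Gm A B θ * (Gm A B θ)ᴴ)) i j)
      volume 0 (2*π) := by
  have hg := continuous_Gm A B hA
  have hcoef : Continuous fun θ => (Ψ θ : ℂ) / quad A B Λ θ :=
    (Complex.continuous_ofReal.comp hΨc).div (cont_uu A B hA Λ)
      (quad_ne_zero A B Λ hq)
  have hc : Continuous fun θ =>
      (((Ψ θ : ℂ) / quad A B Λ θ) • (Gm A B θ * (Gm A B θ)ᴴ)) i j := by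
    simp only [Matrix.smul_apply, smul_eq_mul]
    exact hcoef.mul ((hg.matrix_mul hg.matrix_conjTranspose).matrix_elem i j)
  exact hc.intervalIntegrable _ _

lemma itg_herm (hΛH : Λ.IsHermitian) {X : Mat n} (hX : X.IsHermitian) (θ : ℝ) :
    (itg A B Ψ Λ X θ).IsHermitian := by
  unfold itg
  rw [Matrix.IsHermitian, Matrix.conjTranspose_smul,
    (isHermitian_mul_conjTranspose_self (Gm A B θ)).eq]
  congr 1
  rw [Complex.star_def, map_div₀, _root_.map_mul, Complex.conj_ofReal,
    conj_uu A B hX, map_pow, quad_conj A B Λ hΛH]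

lemma itg_psd (hΛH : Λ.IsHermitian) (hΨpos : ∀ θ, 0 < Ψ θ)
    (hq : ∀ θ, 0 < (quad A B Λ θ).re) {X : Mat n} (hX : X.PosSemidef) (θ : ℝ) :
    (itg A B Ψ Λ X θ).PosSemidef := by
  have h1 : 0 ≤ uu A B X θ := uu_nonneg A B hX θ
  have h1' : uu A B X θ = (((uu A B X θ).re : ℝ) : ℂ) := by
    have h := Complex.le_def.mp h1
    exact Complex.ext rfl (by simpa using h.2.symm)
  have h2 : 0 ≤ ((Ψ θ : ℂ) * uu A B X θ) / (quad A B Λ θ) ^ 2 := by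
    rw [quad_real A B Λ hΛH θ, h1', ← Complex.ofReal_pow, ← Complex.ofReal_mul,
      ← Complex.ofReal_div, Complex.zero_le_real]
    have ha : 0 ≤ (uu A B X θ).re := by simpa using (Complex.le_def.mp h1).1
    exact div_nonneg (mul_nonneg (hΨpos θ).le ha) (by positivity)
  exact smul_posSemidef h2 (Matrix.posSemidef_self_mul_conjTranspose _)

lemma itg_sub (hq : ∀ θ, 0 < (quad A B Λ θ).re) (X Z : Mat n) (θ : ℝ) :
    itg A B Ψ Λ (X - Z) θ = itg A B Ψ Λ X θ - itg A B Ψ Λ Z θ := by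
  unfold itg
  rw [uu_sub, ← sub_smul]
  congr 1
  ring

lemma msqrt_herm (hΛ : Λ.PosDef) : (msqrt Λ).IsHermitian := by
  rw [msqrt, dif_pos hΛ.posSemidef]
  have hd : (diagonal ((↑) ∘ (√·) ∘ hΛ.posSemidef.1.eigenvalues) : Mat n).PosSemidef :=
    Matrix.posSemidef_diagonal_iff.mpr fun i => by simp [Real.sqrt_nonneg]
  exact (hd.mul_mul_conjTranspose_same _).1

lemma msqrt_mul_self (hΛ : Λ.PosDef) : msqrt Λ * msqrt Λ = Λ := by
  rw [msqrt, dif_pos hΛ.posSemidef]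
  have hU2 : (star (hΛ.posSemidef.1.eigenvectorUnitary : Mat n)) *
      (hΛ.posSemidef.1.eigenvectorUnitary : Mat n) = 1 := Unitary.coe_star_mul_self _
  conv_rhs => rw [hΛ.posSemidef.1.spectral_theorem, Unitary.conjStarAlgAut_apply]
  simp only [Matrix.mul_assoc, Unitary.coe_star]
  rw [← Matrix.mul_assoc (star _) _, hU2, Matrix.one_mul,
    ← Matrix.mul_assoc (Matrix.diagonal _) (Matrix.diagonal _), Matrix.diagonal_mul_diagonal]
  congr 2
  refine congrArg diagonal ?_
  funext i
  have h0 := hΛ.posSemidef.eigenvalues_nonneg i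
  simp only [Function.comp_apply]
  rw [← Complex.ofReal_mul, Real.mul_self_sqrt h0]
  rfl

lemma Tmap_psd (hA : IsStable A) (hΨc : Continuous Ψ) (hΨpos : ∀ θ, 0 < Ψ θ)
    (hΛ : Λ.PosDef) (hq : ∀ θ, 0 < (quad A B Λ θ).re)
    {X : Mat n} (hX : X.PosSemidef) : (Tmap A B Ψ Λ X).PosSemidef := by
  have hm := mInt_posSemidef (itg_int A B Ψ Λ hA hΨc hq X)
    (itg_psd A B Ψ Λ hΛ.1 hΨpos hq hX)
  have h := hm.conjTranspose_mul_mul_same (msqrt Λ)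
  rwa [(msqrt_herm Λ hΛ).eq] at h

lemma Tmap_herm (hA : IsStable A) (hΨc : Continuous Ψ) (hΛ : Λ.PosDef)
    {X : Mat n} (hX : X.IsHermitian) : (Tmap A B Ψ Λ X).IsHermitian := by
  have hm := mInt_isHermitian (itg_herm A B Ψ Λ hΛ.1 hX)
  unfold Tmap
  rw [Matrix.IsHermitian, Matrix.conjTranspose_mul, Matrix.conjTranspose_mul, hm.eq,
    (msqrt_herm Λ hΛ).eq, Matrix.mul_assoc]

lemma trace_itg_mul (hq : ∀ θ, 0 < (quad A B Λ θ).re) (X : Mat n) (θ : ℝ) :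
    (itg A B Ψ Λ X θ * Λ).trace = (Ψ θ : ℂ) * uu A B X θ / quad A B Λ θ := by
  unfold itg
  rw [Matrix.smul_mul, Matrix.trace_smul]
  have h : (Gm A B θ * (Gm A B θ)ᴴ * Λ).trace = quad A B Λ θ := by
    rw [Matrix.mul_assoc, Matrix.trace_mul_comm, Matrix.trace_fin_one]
    rfl
  rw [h, smul_eq_mul]
  have h0 := quad_ne_zero A B Λ hq θ
  field_simp

lemma trace_Tmap (hA : IsStable A) (hΨc : Continuous Ψ) (hΛ : Λ.PosDef)
    (hq : ∀ θ, 0 < (quad A B Λ θ).re) (X : Mat n) :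
    (Tmap A B Ψ Λ X).trace = sInt (fun θ => (Ψ θ : ℂ) * uu A B X θ / quad A B Λ θ) := by
  unfold Tmap
  rw [Matrix.trace_mul_comm (msqrt Λ * mInt (itg A B Ψ Λ X)) (msqrt Λ), ← Matrix.mul_assoc,
    msqrt_mul_self Λ hΛ, Matrix.trace_mul_comm,
    trace_mInt_mul _ _ (itg_int A B Ψ Λ hA hΨc hq X)]
  congr 1
  funext θ
  exact trace_itg_mul A B Ψ Λ hq X θ

lemma trace_eq_mom (hA : IsStable A) (hΨc : Continuous Ψ)
    (hq : ∀ θ, 0 < (quad A B Λ θ).re) (hmom : moment A B Ψ Λ = 1) (X : Mat n) :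
    X.trace = sInt (fun θ => (Ψ θ : ℂ) * uu A B X θ / quad A B Λ θ) := by
  conv_lhs => rw [← Matrix.one_mul X, ← hmom]
  unfold moment
  rw [trace_mInt_mul _ _ (mom_int A B Ψ Λ hA hΨc hq)]
  congr 1
  funext θ
  rw [Matrix.smul_mul, Matrix.trace_smul]
  have h : (Gm A B θ * (Gm A B θ)ᴴ * X).trace = uu A B X θ := by
    rw [Matrix.mul_assoc, Matrix.trace_mul_comm, Matrix.trace_fin_one]
    rfl
  rw [h, smul_eq_mul]
  ring

lemma trace_Tmap_eq_trace (hA : IsStable A) (hΨc : Continuous Ψ) (hΛ : Λ.PosDef)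
    (hq : ∀ θ, 0 < (quad A B Λ θ).re) (hmom : moment A B Ψ Λ = 1) (X : Mat n) :
    (Tmap A B Ψ Λ X).trace = X.trace := by
  rw [trace_Tmap A B Ψ Λ hA hΨc hΛ hq X, trace_eq_mom A B Ψ Λ hA hΨc hq hmom X]

lemma Tmap_sub (hA : IsStable A) (hΨc : Continuous Ψ)
    (hq : ∀ θ, 0 < (quad A B Λ θ).re) (X Z : Mat n) :
    Tmap A B Ψ Λ (X - Z) = Tmap A B Ψ Λ X - Tmap A B Ψ Λ Z := by
  unfold Tmap
  rw [← Matrix.sub_mul, ← Matrix.mul_sub,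
    mInt_sub _ _ (itg_int A B Ψ Λ hA hΨc hq X) (itg_int A B Ψ Λ hA hΨc hq Z)]
  have he : (fun θ => itg A B Ψ Λ X θ - itg A B Ψ Λ Z θ) = itg A B Ψ Λ (X - Z) :=
    funext fun θ => (itg_sub A B Ψ Λ hq X Z θ).symm
  rw [he]

end Facts

section Diag

variable {U : Mat n} {ev : Fin n → ℝ}

/-- conjugated diagonal matrices built from a fixed unitary and eigenvalue list -/
def Dm (U : Mat n) (ev : Fin n → ℝ) (f : ℝ → ℝ) : Mat n :=
  U * Matrix.diagonal (fun i => ((f (ev i) : ℝ) : ℂ)) * star U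

lemma Dm_congr (f₁ f₂ : ℝ → ℝ) (h : ∀ t, f₁ t = f₂ t) : Dm U ev f₁ = Dm U ev f₂ := by
  rw [funext h]

lemma Dm_mul (hU2 : star U * U = 1) (f₁ f₂ : ℝ → ℝ) :
    Dm U ev f₁ * Dm U ev f₂ = Dm U ev (fun t => f₁ t * f₂ t) := by
  unfold Dm
  simp only [Matrix.mul_assoc]
  rw [← Matrix.mul_assoc (star U) U, hU2, Matrix.one_mul,
    ← Matrix.mul_assoc (Matrix.diagonal _) (Matrix.diagonal _), Matrix.diagonal_mul_diagonal]
  congr 2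
  funext i
  push_cast
  ring

lemma Dm_trace (hU2 : star U * U = 1) (f : ℝ → ℝ) :
    (Dm U ev f).trace = ((∑ i, f (ev i) : ℝ) : ℂ) := by
  unfold Dm
  rw [Matrix.trace_mul_cycle, hU2, Matrix.one_mul, Matrix.trace_diagonal]
  push_cast
  ring

lemma Dm_psd (f : ℝ → ℝ) (hf : ∀ i, 0 ≤ f (ev i)) : (Dm U ev f).PosSemidef := by
  have hd : (Matrix.diagonal fun i => ((f (ev i) : ℝ) : ℂ)).PosSemidef :=
    Matrix.posSemidef_diagonal_iff.mpr fun i => Complex.zero_le_real.mpr (hf i)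
  have h := hd.mul_mul_conjTranspose_same U
  unfold Dm
  rwa [Matrix.star_eq_conjTranspose]

lemma Dm_sub (f₁ f₂ : ℝ → ℝ) :
    Dm U ev f₁ - Dm U ev f₂ = Dm U ev (fun t => f₁ t - f₂ t) := by
  unfold Dm
  rw [← Matrix.sub_mul, ← Matrix.mul_sub, Matrix.diagonal_sub]
  congr 2
  funext i
  push_cast
  ring

lemma Dm_zero : Dm U ev (fun _ => 0) = 0 := by
  unfold Dm
  simp

end Diag

end Stmt16Aux

open Stmt16Aux
/-- all eigenvalues of M are nonnegative. -/
theorem stmt16 {n : ℕ} (A : Mat n) (B : Vec n) (Ψ : ℝ → ℝ) (Λ : Mat n)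
    (hA : IsStable A) (hR : Reachable A B)
    (hΨc : Continuous Ψ) (hΨpos : ∀ θ, 0 < Ψ θ)
    (hΛ : Λ.PosDef)
    (hq : ∀ θ, 0 < (quad A B Λ θ).re)
    (hmom : moment A B Ψ Λ = 1)
    (Y : Mat n) (α : ℂ) (hY : Y.IsHermitian) (hY0 : Y ≠ 0)
    (heig : Mlin A B Ψ Λ Y = α • Y) :
    α.im = 0 ∧ 0 ≤ α.re := by
  classical
  -- T Y = (1 - α) • Y
  rw [Mlin_eq] at heig
  have hT : Tmap A B Ψ Λ Y = (1 - α) • Y := by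
    have h1 : Tmap A B Ψ Λ Y = Y - α • Y := by
      rw [← heig]; abel
    rw [h1, sub_smul, one_smul]
  -- α is real
  have hTH : (Tmap A B Ψ Λ Y).IsHermitian := Tmap_herm A B Ψ Λ hA hΨc hΛ hY
  have hstar : star (1 - α) = 1 - α := by
    have h1 := hTH.eq
    rw [hT, Matrix.conjTranspose_smul, hY.eq] at h1
    have h2 : (star (1 - α) - (1 - α)) • Y = 0 := by rw [sub_smul, h1, sub_self]
    rcases smul_eq_zero.mp h2 with h3 | h3
    · exact sub_eq_zero.mp h3
    · exact absurd h3 hY0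
  have hαim : α.im = 0 := by
    have : (starRingEnd ℂ) α = α := by
      have := hstar
      rw [star_sub, star_one] at this
      have h4 : star α = α := by
        have := congrArg (fun z => (1 : ℂ) - z) this
        simpa using this
      simpa [Complex.star_def] using h4
    exact Complex.conj_eq_iff_im.mp this
  refine ⟨hαim, ?_⟩
  by_contra hneg
  push_neg at hneg
  set c : ℝ := 1 - α.re with hc_def
  have hc1 : 1 < c := by simp only [hc_def]; linarith
  have hαc : (1 : ℂ) - α = (c : ℂ) := by
    apply Complex.ext <;> simp [hc_def, hαim]
  rw [hαc] at hT
  -- spectral decomposition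
  set U : Mat n := (hY.eigenvectorUnitary : Mat n) with hU_def
  set ev : Fin n → ℝ := hY.eigenvalues with hev_def
  have hU1 : U * star U = 1 := Matrix.mem_unitaryGroup_iff.mp hY.eigenvectorUnitary.2
  have hU2 : star U * U = 1 := Matrix.mem_unitaryGroup_iff'.mp hY.eigenvectorUnitary.2
  have hYD : Y = Dm U ev id := by
      have h := hY.spectral_theorem
      rw [Unitary.conjStarAlgAut_apply] at h
      exact h
  -- positive and negative parts
  set Yp : Mat n := Dm U ev (fun t => max t 0) with hYp_def
  set Ym : Mat n := Dm U ev (fun t => max (-t) 0) with hYm_def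
  set P : Mat n := Dm U ev (fun t => if 0 < t then 1 else 0) with hP_def
  set P' : Mat n := Dm U ev (fun t => if t < 0 then 1 else 0) with hP'_def
  set Tp : ℝ := ∑ i, max (ev i) 0 with hTp_def
  set Tm : ℝ := ∑ i, max (-ev i) 0 with hTm_def
  have hTp_nonneg : 0 ≤ Tp := Finset.sum_nonneg fun i _ => le_max_right _ _
  have hTm_nonneg : 0 ≤ Tm := Finset.sum_nonneg fun i _ => le_max_right _ _
  have hsplit : Y = Yp - Ym := by
    rw [hYp_def, hYm_def, Dm_sub, hYD]
    exact Dm_congr _ _ fun t => (max_zero_sub_eq_self t).symm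
  have hYpPSD : Yp.PosSemidef := Dm_psd _ fun i => le_max_right _ _
  have hYmPSD : Ym.PosSemidef := Dm_psd _ fun i => le_max_right _ _
  have hPpsd : P.PosSemidef := Dm_psd _ fun i => by positivity
  have hP'psd : P'.PosSemidef := Dm_psd _ fun i => by positivity
  have hP2 : P * P = P := by
    rw [hP_def, Dm_mul hU2]
    exact Dm_congr _ _ fun t => by by_cases h : 0 < t <;> simp [h]
  have hP'2 : P' * P' = P' := by
    rw [hP'_def, Dm_mul hU2]
    exact Dm_congr _ _ fun t => by by_cases h : t < 0 <;> simp [h]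
  have hPY : P * Y = Yp := by
    rw [hP_def, hYD, Dm_mul hU2, hYp_def]
    exact Dm_congr _ _ fun t => by
      by_cases h : 0 < t
      · simp [h, max_eq_left h.le]
      · simp [h, max_eq_right (not_lt.mp h)]
  have hP'Y : P' * Y = Dm U ev (fun t => -(max (-t) 0)) := by
    rw [hP'_def, hYD, Dm_mul hU2]
    exact Dm_congr _ _ fun t => by
      by_cases h : t < 0
      · simp [h, max_eq_left (by linarith : (0:ℝ) ≤ -t)]
      · simp [h, max_eq_right (by linarith [not_lt.mp h] : -t ≤ 0)]
  -- trace identities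
  have htrT : ∀ X : Mat n, (Tmap A B Ψ Λ X).trace = X.trace := fun X =>
    trace_Tmap_eq_trace A B Ψ Λ hA hΨc hΛ hq hmom X
  have hTsplit : Tmap A B Ψ Λ Y = Tmap A B Ψ Λ Yp - Tmap A B Ψ Λ Ym := by
    conv_lhs => rw [hsplit]
    exact Tmap_sub A B Ψ Λ hA hΨc hq Yp Ym
  have hTYpPSD : (Tmap A B Ψ Λ Yp).PosSemidef := Tmap_psd A B Ψ Λ hA hΨc hΨpos hΛ hq hYpPSD
  have hTYmPSD : (Tmap A B Ψ Λ Ym).PosSemidef := Tmap_psd A B Ψ Λ hA hΨc hΨpos hΛ hq hYmPSD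
  have htrYp : Yp.trace = (Tp : ℂ) := by rw [hYp_def, Dm_trace hU2]
  have htrYm : Ym.trace = (Tm : ℂ) := by rw [hYm_def, Dm_trace hU2]
  -- Step 1 : Tp = 0
  have e1 : (P * Tmap A B Ψ Λ Y).trace = ((c * Tp : ℝ) : ℂ) := by
    rw [hT, Matrix.mul_smul, Matrix.trace_smul, hPY, htrYp, smul_eq_mul]
    push_cast
    ring
  have e2 : (P * Tmap A B Ψ Λ Y).trace ≤ (Tp : ℂ) := by
    rw [hTsplit, Matrix.mul_sub, Matrix.trace_sub]
    have b1 : (P * Tmap A B Ψ Λ Yp).trace ≤ (Tp : ℂ) := by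
      have h := trace_proj_le hPpsd.1 hP2 hTYpPSD
      rwa [htrT Yp, htrYp] at h
    have b2 : 0 ≤ (P * Tmap A B Ψ Λ Ym).trace := trace_proj_nonneg hPpsd.1 hP2 hTYmPSD
    calc (P * Tmap A B Ψ Λ Yp).trace - (P * Tmap A B Ψ Λ Ym).trace
        ≤ (P * Tmap A B Ψ Λ Yp).trace := sub_le_self _ b2
      _ ≤ (Tp : ℂ) := b1
  have hTp0 : Tp = 0 := by
    have h := Complex.real_le_real.mp (e1 ▸ e2)
    nlinarith
  have hev_le : ∀ i, ev i ≤ 0 := by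
    intro i
    have h := (Finset.sum_eq_zero_iff_of_nonneg
      (fun j (_ : j ∈ Finset.univ) => le_max_right (ev j) 0)).mp hTp0 i (Finset.mem_univ i)
    calc ev i ≤ max (ev i) 0 := le_max_left _ _
      _ = 0 := h
  -- Step 2 : Tm = 0
  have e1' : (P' * Tmap A B Ψ Λ Y).trace = ((c * (-Tm) : ℝ) : ℂ) := by
    rw [hT, Matrix.mul_smul, Matrix.trace_smul, hP'Y, Dm_trace hU2, smul_eq_mul]
    have : (∑ i, -(max (-ev i) 0)) = -Tm := by
      rw [hTm_def, ← Finset.sum_neg_distrib]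
    rw [this]
    push_cast
    ring
  have e2' : ((-Tm : ℝ) : ℂ) ≤ (P' * Tmap A B Ψ Λ Y).trace := by
    rw [hTsplit, Matrix.mul_sub, Matrix.trace_sub]
    have b1 : 0 ≤ (P' * Tmap A B Ψ Λ Yp).trace := trace_proj_nonneg hP'psd.1 hP'2 hTYpPSD
    have b2 : (P' * Tmap A B Ψ Λ Ym).trace ≤ (Tm : ℂ) := by
      have h := trace_proj_le hP'psd.1 hP'2 hTYmPSD
      rwa [htrT Ym, htrYm] at h
    have h3 := sub_le_sub b1 b2
    rw [zero_sub] at h3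
    calc ((-Tm : ℝ) : ℂ) = -(Tm : ℂ) := by push_cast; ring
      _ ≤ _ := h3
  have hTm0 : Tm = 0 := by
    have h := Complex.real_le_real.mp (e1' ▸ e2')
    nlinarith
  have hev_ge : ∀ i, 0 ≤ ev i := by
    intro i
    have h := (Finset.sum_eq_zero_iff_of_nonneg
      (fun j (_ : j ∈ Finset.univ) => le_max_right (-ev j) 0)).mp hTm0 i (Finset.mem_univ i)
    have h2 : -ev i ≤ 0 := by
      calc -ev i ≤ max (-ev i) 0 := le_max_left _ _
        _ = 0 := h
    linarith
  -- all eigenvalues vanish, so Y = 0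
  have hev0 : ∀ i, ev i = 0 := fun i => le_antisymm (hev_le i) (hev_ge i)
  have hY0' : Y = 0 := by
    rw [hYD, Dm]
    have : (fun i => ((id (ev i) : ℝ) : ℂ)) = fun _ => 0 := by
      funext i; simp [hev0 i]
    rw [this]
    simp
  exact hY0 hY0'
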